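/- Let M ∈ ℝ, c ∈ ℝ with c > 0, assume 4M > 3(c − 1)², and let H be the map H(x,y) = (x̄, ȳ) with x̄ = M + c·x − y², ȳ = (y + x̄² − M)/c. Then at each of the two fixed points of H off the diagonal (i.e. the points (u,v), u ≠ v, with u + v = 1 − c, u·v = (1 − c)² − M), the Jacobian matrix of H has trace strictly greater than 2 and two real eigenvalues λ and λ⁻¹ with λ > 1; i.e. for c > 0 the pitchfork bifurcation at 4M = 3(c − 1)² produces a couple of symmetric saddle fixed points. -/
import Mathlib


/-- The map `H(x,y) = (x̄, ȳ)` with `x̄ = M + c·x − y²` and `ȳ = (y + x̄² − M)/c`,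
the explicit form of the implicit system `x̄ = M + c·x − y²`, `c·ȳ = −M + y + x̄²`. -/
noncomputable def Hmap (M c : ℝ) (p : ℝ × ℝ) : ℝ × ℝ :=
  (M + c * p.1 - p.2 ^ 2,
    (p.2 + (M + c * p.1 - p.2 ^ 2) ^ 2 - M) / c)

/-- The Jacobian matrix (2×2 real derivative matrix) of `Hmap M c` at the point
`(x,y)`, where `x̄ = M + c·x − y²`:
`[[c, −2y], [2x̄, (1 − 4x̄y)/c]]`. -/
noncomputable def HJac (M c : ℝ) (p : ℝ × ℝ) : Matrix (Fin 2) (Fin 2) ℝ :=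
  !![c, -2 * p.2;
     2 * (M + c * p.1 - p.2 ^ 2), (1 - 4 * (M + c * p.1 - p.2 ^ 2) * p.2) / c]

/-- `μ ∈ ℂ` is an eigenvalue of the real 2×2 matrix `A`
(eigenvalues of real matrices are taken over `ℂ`). -/
def hasEigenvalue (A : Matrix (Fin 2) (Fin 2) ℝ) (μ : ℂ) : Prop :=
  (A.map (fun t : ℝ => (t : ℂ)) - μ • 1).det = 0

lemma eig_of_quad (a b c d lam : ℝ) (h : (a - lam)*(d - lam) - b*c = 0) :
    hasEigenvalue !![a,b;c,d] lam := by
  simp [hasEigenvalue, Matrix.det_fin_two, Matrix.map_apply, Matrix.smul_apply,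
    Matrix.one_apply]
  exact_mod_cast h

/-- for `c > 0` and `4M > 3(c−1)²`, the two off-diagonal fixed points of
`H` (the points `(u,v)`, `u ≠ v`, with `u + v = 1 − c`, `u·v = (1−c)² − M`) exist, and at
each of them the Jacobian matrix has trace `> 2` and two real eigenvalues `λ` and `λ⁻¹`
with `λ > 1`: the pitchfork bifurcation produces a symmetric couple of saddles. -/
theorem stmt_16 (M c : ℝ) (hc : 0 < c) (hM : 4 * M > 3 * (c - 1) ^ 2) :
    (∃ u v : ℝ, u ≠ v ∧ Hmap M c (u, v) = (u, v)) ∧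
    ∀ u v : ℝ, u ≠ v → Hmap M c (u, v) = (u, v) →
      (u + v = 1 - c ∧ u * v = (1 - c) ^ 2 - M) ∧
      2 < Matrix.trace (HJac M c (u, v)) ∧
      ∃ lam : ℝ, 1 < lam ∧
        hasEigenvalue (HJac M c (u, v)) (lam : ℂ) ∧
        hasEigenvalue (HJac M c (u, v)) ((lam⁻¹ : ℝ) : ℂ) := by
  have hc' : c ≠ 0 := ne_of_gt hc
  constructor
  · -- existence
    have hD : 0 < 4 * M - 3 * (1 - c) ^ 2 := by nlinarith [sq_nonneg (c-1)]
    obtain ⟨d, hdpos, hd2⟩ : ∃ d : ℝ, 0 < d ∧ d ^ 2 = 4 * M - 3 * (1 - c) ^ 2 :=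
      ⟨Real.sqrt _, Real.sqrt_pos.mpr hD, Real.sq_sqrt hD.le⟩
    set s := 1 - c with hs
    refine ⟨(s + d)/2, (s - d)/2, by intro h; nlinarith, ?_⟩
    have h1 : M + c * ((s+d)/2) - ((s-d)/2) ^ 2 = (s+d)/2 := by nlinarith
    simp only [Hmap, Prod.mk.injEq, h1]
    refine ⟨trivial, ?_⟩
    field_simp
    nlinarith
  · intro u v huv hfix
    have h1 : M + c * u - v ^ 2 = u := congrArg Prod.fst hfix
    have h2' : (v + (M + c * u - v ^ 2) ^ 2 - M) / c = v := congrArg Prod.snd hfix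
    rw [h1] at h2'
    have h2 : v + u ^ 2 - M = c * v := by
      field_simp at h2'; linarith
    have hsum : u + v = 1 - c := by
      have hkey : (u - v) * ((u + v) - (1 - c)) = 0 := by nlinarith
      rcases mul_eq_zero.mp hkey with h | h
      · exact absurd (sub_eq_zero.mp h) huv
      · linarith [sub_eq_zero.mp h]
    have hprod : u * v = (1 - c) ^ 2 - M := by nlinarith
    have htr : Matrix.trace (HJac M c (u, v)) = c + (1 - 4 * u * v) / c := by
      simp [HJac, Matrix.trace_fin_two, h1]
    have key : (2 - c) * c < 1 - 4 * u * v := by nlinarith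
    have hT2 : 2 < c + (1 - 4 * u * v) / c := by
      have := (lt_div_iff₀ hc).mpr key
      linarith
    refine ⟨⟨hsum, hprod⟩, by rw [htr]; exact hT2, ?_⟩
    obtain ⟨T, hT⟩ : ∃ T : ℝ, T = c + (1 - 4 * u * v) / c := ⟨_, rfl⟩
    rw [← hT] at hT2
    have hdisc : 0 < T ^ 2 - 4 := by nlinarith
    obtain ⟨r, hrpos, hr2⟩ : ∃ r : ℝ, 0 < r ∧ r ^ 2 = T ^ 2 - 4 :=
      ⟨Real.sqrt _, Real.sqrt_pos.mpr hdisc, Real.sq_sqrt hdisc.le⟩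
    have hJ : HJac M c (u, v) = !![c, -2*v; 2*u, (1 - 4*u*v)/c] := by
      rw [HJac, h1]
    have hTc : c * T = c ^ 2 + 1 - 4 * u * v := by rw [hT]; field_simp; ring
    refine ⟨(T + r)/2, by linarith, ?_, ?_⟩
    · rw [hJ]
      refine eig_of_quad _ _ _ _ _ ?_
      have hdc : (1 - 4*u*v)/c = T - c := by rw [hT]; ring
      rw [hdc]
      linear_combination hr2/4 + hTc
    · have hinv : ((T + r)/2)⁻¹ = (T - r)/2 := by
        refine inv_eq_of_mul_eq_one_right ?_
        linear_combination -hr2/4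
      rw [hinv, hJ]
      refine eig_of_quad _ _ _ _ _ ?_
      have hdc : (1 - 4*u*v)/c = T - c := by rw [hT]; ring
      rw [hdc]
      linear_combination hr2/4 + hTc
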